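/- Let h > 0 be real and θ₁, θ₂ ∈ ℝ. Over ℂ, let A be the 5×5 matrix (1/h²)·[[4, 0, −1, 0, 0], [0, 4, −1, 0, 0], [−1, −1, 4, −1, −1], [0, 0, −1, 4, 0], [0, 0, −1, 0, 4]], let Φ = diag(e^{−iθ₂}, e^{−iθ₁}, 1, e^{iθ₁}, e^{iθ₂}), let W = (1/5)·I₅, and let V be the 5×1 column vector of ones. Then A is invertible with A⁻¹ = h²·[[13/48, 1/48, 1/12, 1/48, 1/48], [1/48, 13/48, 1/12, 1/48, 1/48], [1/12, 1/12, 1/3, 1/12, 1/12], [1/48, 1/48, 1/12, 13/48, 1/48], [1/48, 1/48, 1/12, 1/48, 13/48]], and the 1×1 matrix Vᵀ W Φ* A⁻¹ Φ V (where Φ* is the conjugate transpose of Φ) has its unique entry equal to (h²/120)((cos θ₁ + cos θ₂ + 4)² + (cos θ₁ + cos θ₂)² + 16). -/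

import Mathlib

set_option maxHeartbeats 4000000


open Matrix Complex

noncomputable def A19 (h : ℝ) : Matrix (Fin 5) (Fin 5) ℂ :=
  (1 / (h ^ 2 : ℂ)) •
    !![4, 0, -1, 0, 0;
       0, 4, -1, 0, 0;
       -1, -1, 4, -1, -1;
       0, 0, -1, 4, 0;
       0, 0, -1, 0, 4]

noncomputable def Phi19 (θ₁ θ₂ : ℝ) : Matrix (Fin 5) (Fin 5) ℂ :=
  diagonal ![exp (-(I * θ₂)), exp (-(I * θ₁)), 1, exp (I * θ₁), exp (I * θ₂)]

noncomputable def W19 : Matrix (Fin 5) (Fin 5) ℂ := (1 / 5 : ℂ) • 1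

def V19 : Matrix (Fin 5) (Fin 1) ℂ := fun _ _ => 1

theorem stmt_19 (h θ₁ θ₂ : ℝ) (hh : 0 < h) :
    IsUnit (A19 h) ∧
    (A19 h)⁻¹ = (h ^ 2 : ℂ) •
      !![13/48, 1/48, 1/12, 1/48, 1/48;
         1/48, 13/48, 1/12, 1/48, 1/48;
         1/12, 1/12, 1/3, 1/12, 1/12;
         1/48, 1/48, 1/12, 13/48, 1/48;
         1/48, 1/48, 1/12, 1/48, 13/48] ∧
    (V19ᵀ * W19 * (Phi19 θ₁ θ₂)ᴴ * (A19 h)⁻¹ * Phi19 θ₁ θ₂ * V19) 0 0 =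
      ((h ^ 2 : ℂ) / 120) * (((Real.cos θ₁ : ℂ) + (Real.cos θ₂ : ℂ) + 4) ^ 2 +
        ((Real.cos θ₁ : ℂ) + (Real.cos θ₂ : ℂ)) ^ 2 + 16) := by
  have hh2 : (h : ℂ) ^ 2 ≠ 0 := by
    simpa using pow_ne_zero 2 (Complex.ofReal_ne_zero.mpr hh.ne')
  set N : Matrix (Fin 5) (Fin 5) ℂ :=
      !![13/48, 1/48, 1/12, 1/48, 1/48;
         1/48, 13/48, 1/12, 1/48, 1/48;
         1/12, 1/12, 1/3, 1/12, 1/12;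
         1/48, 1/48, 1/12, 13/48, 1/48;
         1/48, 1/48, 1/12, 1/48, 13/48] with hN
  set B : Matrix (Fin 5) (Fin 5) ℂ := (h ^ 2 : ℂ) • N with hB
  have key : (!![4, 0, -1, 0, 0;
       0, 4, -1, 0, 0;
       -1, -1, 4, -1, -1;
       0, 0, -1, 4, 0;
       0, 0, -1, 0, 4] : Matrix (Fin 5) (Fin 5) ℂ) * N = 1 := by
    ext i j
    fin_cases i <;> fin_cases j <;>
      simp [hN, Matrix.mul_apply, Fin.sum_univ_five, Matrix.one_apply,
        Matrix.vecHead, Matrix.vecTail] <;> norm_num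
  have hAB : A19 h * B = 1 := by
    rw [A19, hB, Matrix.smul_mul, Matrix.mul_smul, key, smul_smul]
    rw [one_div, inv_mul_cancel₀ hh2, one_smul]
  have hU : IsUnit (A19 h) := by
    have := invertibleOfRightInverse _ _ hAB
    exact isUnit_of_invertible _
  have hInv : (A19 h)⁻¹ = B := inv_eq_right_inv hAB
  refine ⟨hU, hInv, ?_⟩
  rw [hInv, hB, hN]
  have e1 : exp (-(I * (θ₁ : ℂ))) = (exp (I * θ₁))⁻¹ := by rw [Complex.exp_neg]
  have e2 : exp (-(I * (θ₂ : ℂ))) = (exp (I * θ₂))⁻¹ := by rw [Complex.exp_neg]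
  have cgen : ∀ θ : ℝ, (Real.cos θ : ℂ) = (exp (I * θ) + (exp (I * θ))⁻¹) / 2 := by
    intro θ
    rw [Complex.ofReal_cos,
      show Complex.cos (θ : ℂ) = (exp ((θ : ℂ) * I) + exp (-(θ : ℂ) * I)) / 2 from rfl,
      neg_mul, Complex.exp_neg, mul_comm (θ : ℂ) I]
  have c1 := cgen θ₁
  have c2 := cgen θ₂
  have sgen : ∀ θ : ℝ, star (exp (I * (θ : ℂ))) = (exp (I * θ))⁻¹ := by
    intro θ
    have hst : (starRingEnd ℂ) (I * (θ : ℂ)) = -(I * θ) := by simp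
    rw [Complex.star_def, ← Complex.exp_conj, hst, Complex.exp_neg]
  have s1 := sgen θ₁
  have s2 := sgen θ₂
  have sneg : ∀ θ : ℝ, star (exp (-(I * (θ : ℂ)))) = exp (I * θ) := by
    intro θ
    have hst : (starRingEnd ℂ) (-(I * (θ : ℂ))) = I * θ := by simp
    rw [Complex.star_def, ← Complex.exp_conj, hst]
  have hx : exp (I * (θ₁ : ℂ)) ≠ 0 := Complex.exp_ne_zero _
  have hy : exp (I * (θ₂ : ℂ)) ≠ 0 := Complex.exp_ne_zero _
  simp only [Matrix.mul_assoc]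
  rw [Phi19, Matrix.diagonal_conjTranspose]
  simp only [W19, Matrix.smul_mul, Matrix.one_mul, Matrix.smul_apply,
    Matrix.diagonal_mul, Matrix.mul_apply, Matrix.mul_diagonal, Fin.sum_univ_five,
    Matrix.transpose_apply, V19, Matrix.of_apply, Matrix.diagonal_apply,
    Matrix.cons_val_zero, Matrix.cons_val_one, Matrix.head_cons, Matrix.cons_val',
    Matrix.cons_val_fin_one, Matrix.empty_val', Fin.isValue, Matrix.cons_val_two,
    Matrix.tail_cons, Matrix.cons_val_three, Matrix.cons_val_four, Pi.star_apply,
    Matrix.head_fin_const, smul_eq_mul, star_one]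
  simp only [Fin.reduceEq, reduceIte, if_true, mul_one, one_mul, mul_zero, zero_mul,
    add_zero, zero_add]
  simp only [sgen, sneg]
  simp only [e1, e2, c1, c2]
  clear e1 e2 c1 c2 s1 s2 sgen cgen sneg hInv hU hAB key hB hN
  revert hx hy
  generalize exp (I * (θ₁ : ℂ)) = x
  generalize exp (I * (θ₂ : ℂ)) = y
  intro hx hy
  field_simp
  have hxc : x * x⁻¹ = 1 := mul_inv_cancel₀ hx
  have hyc : y * y⁻¹ = 1 := mul_inv_cancel₀ hy
  ring
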